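/- For the k=1 recurrence x_{n+3} x_n = x_{n+2} x_{n+1} + a(x_{n+1} + x_{n+2}) on nonzero terms, the 3×3 discrete Wronskian determinant δ_n = det [[x_n, x_{n+2}, x_{n+4}], [x_{n+1}, x_{n+3}, x_{n+5}], [x_{n+2}, x_{n+4}, x_{n+6}]] satisfies δ_{n+1} = δ_n for all n, i.e. δ_n is independent of n. -/
import Mathlib

lemma heiho_key {F : Type*} [Field F] (a x0 x1 x2 x3 x4 x5 x6 x7 : F)
    (n1 : x1 ≠ 0) (n2 : x2 ≠ 0) (n3 : x3 ≠ 0) (n4 : x4 ≠ 0)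
    (h0 : x3 * x0 = x2 * x1 + a * (x1 + x2))
    (h1 : x4 * x1 = x3 * x2 + a * (x2 + x3))
    (h2 : x5 * x2 = x4 * x3 + a * (x3 + x4))
    (h3 : x6 * x3 = x5 * x4 + a * (x4 + x5))
    (h4 : x7 * x4 = x6 * x5 + a * (x5 + x6)) :
    x1 * (x4 * x7 - x6 * x5) - x3 * (x2 * x7 - x6 * x3) + x5 * (x2 * x5 - x4 * x3) =
    x0 * (x3 * x6 - x5 * x4) - x2 * (x1 * x6 - x5 * x2) + x4 * (x1 * x4 - x3 * x2) := by
  have m : x1^3*x2^2*x3^2*x4 ≠ 0 := by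
    simp [n1, n2, n3, n4, pow_eq_zero_iff, mul_eq_zero]
  apply mul_left_cancel₀ m
  linear_combination
    ((-1)*a*x1^3*x2*x3^2*x4^2 + (-1)*a*x1^3*x2^2*x3*x4^2 + (-1)*a^2*x1^3*x2*x3*x4^2 + (-1)*a^2*x1^3*x2*x3^2*x4) * h0 +
    (a*x1^3*x2*x3^2*x4^2 + a*x1^3*x2*x3^3*x4 + a*x1^3*x2^2*x3*x4^2 + a*x1^3*x2^2*x3^2*x4 + a^2*x1^3*x2*x3*x4^2 + (2)*a^2*x1^3*x2*x3^2*x4 + a^2*x1^3*x2*x3^3) * h1 +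
    ((-1)*x1^3*x2^3*x3^2*x4 + x1^4*x2^2*x3*x4^2 + (-1)*a*x1^3*x2^2*x3^2*x5 + (-2)*a*x1^3*x2^2*x3^2*x4 + (-1)*a*x1^3*x2^2*x3^3 + a*x1^4*x2*x3*x4^2 + a*x1^4*x2*x3^2*x4 + a*x1^4*x2^2*x3*x4 + (-1)*a*x0*x1^3*x2*x3^2*x4 + (-1)*a^2*x1^3*x2*x3^2*x4 + (-1)*a^2*x1^3*x2*x3^3 + (-1)*a^2*x1^3*x2^2*x3^2 + a^2*x1^4*x2*x3*x4) * h2 +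
    (x1^3*x2^2*x3^3*x4 + (-1)*x1^3*x2^3*x3^2*x5 + x1^4*x2^3*x3*x4 + (-1)*x0*x1^3*x2^2*x3^2*x4 + (-1)*a*x1^3*x2^3*x3^2 + a*x1^4*x2^2*x3*x4) * h3 +
    ((-1)*x1^3*x2^3*x3^3 + x1^4*x2^2*x3^2*x4) * h4

theorem heiho_wronskian_constant_k1 {F : Type*} [Field F] (a : F)
    (x : ℤ → F) (hnz : ∀ n, x n ≠ 0)
    (hrec : ∀ n : ℤ, x (n + 3) * x n = x (n + 2) * x (n + 1) + a * (x (n + 1) + x (n + 2))) :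
    ∀ n : ℤ,
      Matrix.det !![x (n + 1), x (n + 3), x (n + 5);
                    x (n + 2), x (n + 4), x (n + 6);
                    x (n + 3), x (n + 5), x (n + 7)] =
      Matrix.det !![x n,       x (n + 2), x (n + 4);
                    x (n + 1), x (n + 3), x (n + 5);
                    x (n + 2), x (n + 4), x (n + 6)] := by
  intro n
  have h0 := hrec n
  have h1 := hrec (n + 1)
  have h2 := hrec (n + 2)
  have h3 := hrec (n + 3)
  have h4 := hrec (n + 4)
  simp only [show n + 1 + 3 = n + 4 from by ring, show n + 1 + 2 = n + 3 from by ring,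
    show n + 1 + 1 = n + 2 from by ring, show n + 2 + 3 = n + 5 from by ring,
    show n + 2 + 2 = n + 4 from by ring, show n + 2 + 1 = n + 3 from by ring,
    show n + 3 + 3 = n + 6 from by ring, show n + 3 + 2 = n + 5 from by ring,
    show n + 3 + 1 = n + 4 from by ring, show n + 4 + 3 = n + 7 from by ring,
    show n + 4 + 2 = n + 6 from by ring, show n + 4 + 1 = n + 5 from by ring] at h1 h2 h3 h4
  simp [Matrix.det_fin_three]
  have := heiho_key a (x n) (x (n+1)) (x (n+2)) (x (n+3)) (x (n+4)) (x (n+5)) (x (n+6)) (x (n+7))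
    (hnz (n+1)) (hnz (n+2)) (hnz (n+3)) (hnz (n+4)) h0 h1 h2 h3 h4
  linear_combination this
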